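/- Let S = k[x_1,…,x_{t+1}] be a polynomial ring over a field k, and let I be a squarefree monomial ideal minimally generated by n ≥ 3 squarefree monomials, each of degree t. Then the Scarf complex of I consists exactly of the empty face and the n singleton faces; in particular, no face of cardinality at least 2 belongs to the Scarf complex. -/

import Mathlib

/-- A subset `σ` of the minimal generating set `M` (squarefree monomials identified with their
sets of variables, lcm identified with union) is a face of the Scarf complex when its lcm is
unique among subsets of `M` (with `lcm ∅ = 1`, i.e. the empty set of variables). -/
def ScarfFace {α : Type*} [DecidableEq α] (M σ : Finset (Finset α)) : Prop :=
  σ ⊆ M ∧ ∀ τ ⊆ M, τ.sup id = σ.sup id → τ = σ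

/-- If `I ⊆ k[x_1,…,x_{t+1}]` is a squarefree monomial ideal minimally
generated by `n ≥ 3` squarefree monomials of degree `t`, then the Scarf complex of `I` consists
exactly of the empty face and the `n` singleton faces. -/
theorem scarf_of_degree_t_in_t_plus_one_vars {t n : ℕ} (hn : 3 ≤ n)
    (M : Finset (Finset (Fin (t + 1)))) (hM : M.card = n)
    (hdeg : ∀ m ∈ M, m.card = t) (σ : Finset (Finset (Fin (t + 1)))) (hσ : σ ⊆ M) :
    ScarfFace M σ ↔ (σ = ∅ ∨ ∃ m ∈ M, σ = {m}) := by
  -- First, t ≥ 1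
  have ht : 1 ≤ t := by
    by_contra h
    push_neg at h
    interval_cases t
    have hsub : M ⊆ {∅} := by
      intro m hm
      simp [Finset.card_eq_zero.mp (hdeg m hm)]
    have := Finset.card_le_card hsub
    simp at this
    omega
  -- distinct generators union to univ
  have hunion : ∀ a ∈ M, ∀ b ∈ M, a ≠ b → a ∪ b = Finset.univ := by
    intro a ha b hb hab
    apply Finset.eq_univ_of_card
    have hss : a ∩ b ⊂ a := by
      refine Finset.ssubset_iff_subset_ne.mpr ⟨Finset.inter_subset_left, ?_⟩
      intro h
      have hab' : a ⊆ b := by rw [← h]; exact Finset.inter_subset_right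
      exact hab (Finset.eq_of_subset_of_card_le hab'
        (by rw [hdeg a ha, hdeg b hb]))
    have h1 : (a ∩ b).card < t := by
      have := Finset.card_lt_card hss
      rw [hdeg a ha] at this
      exact this
    have h2 := Finset.card_union_add_card_inter a b
    rw [hdeg a ha, hdeg b hb] at h2
    have h3 : (a ∪ b).card ≤ Fintype.card (Fin (t + 1)) := Finset.card_le_univ _
    simp only [Fintype.card_fin] at h3 ⊢
    omega
  constructor
  · rintro ⟨-, huniq⟩
    by_contra hcon
    push_neg at hcon
    obtain ⟨h0, h1⟩ := hcon
    -- σ has at least two elements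
    have hcard : 1 < σ.card := by
      rcases Nat.lt_or_ge σ.card 2 with h | h
      · interval_cases hc : σ.card
        · exact absurd (Finset.card_eq_zero.mp hc) h0.ne_empty
        · obtain ⟨m, hm⟩ := Finset.card_eq_one.mp hc
          exact absurd hm (h1 m (hσ (hm ▸ Finset.mem_singleton_self m)))
      · omega
    obtain ⟨m1, hm1, m2, hm2, hne⟩ := Finset.one_lt_card.mp hcard
    have hm1M := hσ hm1
    have hm2M := hσ hm2
    -- sup σ = univ
    have hsupσ : σ.sup id = Finset.univ := by
      apply Finset.univ_subset_iff.mp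
      rw [← hunion m1 hm1M m2 hm2M hne]
      exact Finset.union_subset (Finset.le_sup (f := id) hm1)
        (Finset.le_sup (f := id) hm2)
    -- find a third generator
    have hpair : ({m1, m2} : Finset (Finset (Fin (t + 1)))) ⊆ M := by
      intro x hx
      rcases Finset.mem_insert.mp hx with h | h
      · exact h ▸ hm1M
      · exact (Finset.mem_singleton.mp h) ▸ hm2M
    have hpc : ({m1, m2} : Finset (Finset (Fin (t + 1)))).card = 2 := by
      rw [Finset.card_insert_of_notMem (by simp [hne]), Finset.card_singleton]
    have hne3 : (M \ {m1, m2}).Nonempty := by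
      rw [← Finset.card_pos, Finset.card_sdiff_of_subset hpair, hpc, hM]
      omega
    obtain ⟨c, hc⟩ := hne3
    rw [Finset.mem_sdiff] at hc
    obtain ⟨hcM, hcne⟩ := hc
    have hc1 : c ≠ m1 := fun h => hcne (by simp [h])
    have hc2 : c ≠ m2 := fun h => hcne (by simp [h])
    by_cases hσ2 : σ = {m1, m2}
    · have := huniq {m1, c} (by
        intro x hx
        rcases Finset.mem_insert.mp hx with h | h
        · exact h ▸ hm1M
        · exact (Finset.mem_singleton.mp h) ▸ hcM)
        (by
          rw [hsupσ]
          simp only [Finset.sup_insert, Finset.sup_singleton, id]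
          exact hunion m1 hm1M c hcM (Ne.symm hc1))
      rw [hσ2] at this
      have : c ∈ ({m1, m2} : Finset (Finset (Fin (t + 1)))) := by
        rw [← this]; simp
      simp [hc1, hc2] at this
    · exact hσ2 (Eq.symm (huniq {m1, m2} hpair (by
        rw [hsupσ]
        simp only [Finset.sup_insert, Finset.sup_singleton, id]
        exact hunion m1 hm1M m2 hm2M hne)))
  · rintro (rfl | ⟨m, hmM, rfl⟩)
    · refine ⟨Finset.empty_subset _, fun τ hτ hsup => ?_⟩
      simp only [Finset.sup_empty, Finset.bot_eq_empty] at hsup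
      rw [Finset.eq_empty_iff_forall_notMem]
      intro x hx
      have hxe : x ⊆ (∅ : Finset (Fin (t + 1))) := by
        rw [← hsup]
        exact Finset.le_sup (f := id) hx
      have := hdeg x (hτ hx)
      rw [Finset.subset_empty.mp hxe] at this
      simp at this
      omega
    · refine ⟨Finset.singleton_subset_iff.mpr hmM, fun τ hτ hsup => ?_⟩
      simp only [Finset.sup_singleton, id] at hsup
      have hτne : τ.Nonempty := by
        rcases Finset.eq_empty_or_nonempty τ with rfl | h
        · simp only [Finset.sup_empty, Finset.bot_eq_empty] at hsup
          have := hdeg m hmM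
          rw [← hsup] at this
          simp at this
          omega
        · exact h
      rw [Finset.eq_singleton_iff_nonempty_unique_mem]
      refine ⟨hτne, fun x hx => ?_⟩
      have hxm : x ⊆ m := by
        rw [← hsup]; exact Finset.le_sup (f := id) hx
      exact Finset.eq_of_subset_of_card_le hxm
        (by rw [hdeg x (hτ hx), hdeg m hmM])
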